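/- Let {g_n} be a sequence of differentiable convex functions on an open interval I converging pointwise to g. If g is differentiable at a point x ∈ I, then g_n'(x) → g'(x). -/
import Mathlib

open Filter

theorem griffith_lemma (a b : ℝ) (g : ℕ → ℝ → ℝ) (glim : ℝ → ℝ)
    (hconv : ∀ n, ConvexOn ℝ (Set.Ioo a b) (g n))
    (hdiff : ∀ n, DifferentiableOn ℝ (g n) (Set.Ioo a b))
    (hlim : ∀ y ∈ Set.Ioo a b, Tendsto (fun n => g n y) atTop (nhds (glim y)))
    (x : ℝ) (hx : x ∈ Set.Ioo a b) (hg : DifferentiableAt ℝ glim x) :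
    Tendsto (fun n => deriv (g n) x) atTop (nhds (deriv glim x)) := by
  have hdAt : ∀ n, DifferentiableAt ℝ (g n) x :=
    fun n => (hdiff n).differentiableAt (Ioo_mem_nhds hx.1 hx.2)
  have hslope : Tendsto (slope glim x) (nhdsWithin x {x}ᶜ) (nhds (deriv glim x)) :=
    hasDerivAt_iff_tendsto_slope.mp hg.hasDerivAt
  -- convergence of slopes of g n to slope of glim, for fixed y
  have hsl : ∀ y ∈ Set.Ioo a b, y ≠ x →
      Tendsto (fun n => slope (g n) x y) atTop (nhds (slope glim x y)) := by
    intro y hy hyx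
    simp only [slope_def_field]
    have := ((hlim y hy).sub (hlim x hx)).div_const (y - x)
    simpa [div_eq_mul_inv] using this
  refine tendsto_order.2 ⟨?_, ?_⟩
  · -- lower bound: c < deriv glim x
    intro c hc
    have hslopeL : Tendsto (slope glim x) (nhdsWithin x (Set.Iio x)) (nhds (deriv glim x)) :=
      hslope.mono_left (nhdsWithin_mono x (fun z hz => ne_of_lt hz))
    have h1 : ∀ᶠ y in nhdsWithin x (Set.Iio x), c < slope glim x y :=
      hslopeL.eventually (eventually_gt_nhds hc)
    have h2 : ∀ᶠ y in nhdsWithin x (Set.Iio x), y ∈ Set.Ioo a b := by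
      have : Set.Ioo a x ∈ nhdsWithin x (Set.Iio x) :=
        mem_nhdsWithin.2 ⟨Set.Ioi a, isOpen_Ioi, hx.1, fun z hz => ⟨hz.1, hz.2⟩⟩
      filter_upwards [this] with z hz
      exact ⟨hz.1, hz.2.trans hx.2⟩
    obtain ⟨y, ⟨hyc, hyab⟩, hyx⟩ := ((h1.and h2).and self_mem_nhdsWithin).exists
    have key : ∀ n, slope (g n) x y ≤ deriv (g n) x := by
      intro n
      have := (hconv n).slope_le_deriv hyab hx hyx (hdAt n)
      rwa [slope_comm] at this
    have : ∀ᶠ n in atTop, c < slope (g n) x y :=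
      (hsl y hyab (ne_of_lt hyx)).eventually (eventually_gt_nhds hyc)
    filter_upwards [this] with n hn
    exact hn.trans_le (key n)
  · -- upper bound: deriv glim x < c
    intro c hc
    have hslopeR : Tendsto (slope glim x) (nhdsWithin x (Set.Ioi x)) (nhds (deriv glim x)) :=
      hslope.mono_left (nhdsWithin_mono x (fun z hz => ne_of_gt hz))
    have h1 : ∀ᶠ y in nhdsWithin x (Set.Ioi x), slope glim x y < c :=
      hslopeR.eventually (eventually_lt_nhds hc)
    have h2 : ∀ᶠ y in nhdsWithin x (Set.Ioi x), y ∈ Set.Ioo a b := by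
      have : Set.Ioo x b ∈ nhdsWithin x (Set.Ioi x) :=
        mem_nhdsWithin.2 ⟨Set.Iio b, isOpen_Iio, hx.2, fun z hz => ⟨hz.2, hz.1⟩⟩
      filter_upwards [this] with z hz
      exact ⟨hx.1.trans hz.1, hz.2⟩
    obtain ⟨y, ⟨hyc, hyab⟩, hyx⟩ := ((h1.and h2).and self_mem_nhdsWithin).exists
    have key : ∀ n, deriv (g n) x ≤ slope (g n) x y :=
      fun n => (hconv n).deriv_le_slope hx hyab hyx (hdAt n)
    have : ∀ᶠ n in atTop, slope (g n) x y < c :=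
      (hsl y hyab (ne_of_gt hyx)).eventually (eventually_lt_nhds hyc)
    filter_upwards [this] with n hn
    exact (key n).trans_lt hn
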